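/- There exists a constant c > 0 such that the following holds for every real β ≥ 1. Let R ⊆ ℝ² be a compact convex set, and suppose B(m,r) with r > 0 is a maximal inscribed disk of R, i.e., B(m,r) ⊆ R and every closed disk contained in R has radius at most r. If the diameter of R is at most 2βr, then there exists a finite set S ⊆ ℝ² with |S| ≤ c·β such that R ⊆ ⋃_{p ∈ S} B(p, r). -/

import Mathlib

set_option maxHeartbeats 1000000

open Metric Complex

private lemma combo3 {E : Type*} [AddCommGroup E] [Module ℝ E] {R : Set E} (hR : Convex ℝ R)
    {a b c : E} (ha : a ∈ R) (hb : b ∈ R) (hc : c ∈ R) {α β γ : ℝ}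
    (hα : 0 ≤ α) (hβ : 0 ≤ β) (hγ : 0 ≤ γ) (hsum : α + β + γ = 1) :
    α • a + β • b + γ • c ∈ R := by
  rcases eq_or_lt_of_le (add_nonneg hα hβ) with h | h
  · have hα0 : α = 0 := by linarith
    have hβ0 : β = 0 := by linarith
    have hγ1 : γ = 1 := by linarith
    simpa [hα0, hβ0, hγ1] using hc
  · have hq : (α / (α + β)) • a + (β / (α + β)) • b ∈ R :=
      hR ha hb (div_nonneg hα h.le) (div_nonneg hβ h.le) (by field_simp)
    have hmem := hR hq hc h.le hγ (show (α + β) + γ = 1 by linarith)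
    have key : (α + β) • ((α / (α + β)) • a + (β / (α + β)) • b) + γ • c
        = α • a + β • b + γ • c := by
      rw [smul_add, smul_smul, smul_smul]
      congr 2 <;> field_simp
    rwa [key] at hmem

/-- Paper's Lemma 4.2 (geometric content): there is a universal constant `c > 0` such
that any compact convex region `R ⊆ ℝ²` whose maximal inscribed disk is `B(m, r)` and
whose diameter is at most `2βr` (for `β ≥ 1`) can be covered by at most `c·β` disks of
radius `r`. -/
theorem thick_convex_cover_by_disks :
    ∃ c : ℝ, 0 < c ∧
      ∀ (β : ℝ), 1 ≤ β →
        ∀ (R : Set (EuclideanSpace ℝ (Fin 2))), IsCompact R → Convex ℝ R →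
          ∀ (m : EuclideanSpace ℝ (Fin 2)) (r : ℝ), 0 < r →
            Metric.closedBall m r ⊆ R →
            (∀ (m' : EuclideanSpace ℝ (Fin 2)) (r' : ℝ),
              Metric.closedBall m' r' ⊆ R → r' ≤ r) →
            Metric.diam R ≤ 2 * β * r →
            ∃ S : Finset (EuclideanSpace ℝ (Fin 2)),
              (S.card : ℝ) ≤ c * β ∧ R ⊆ ⋃ p ∈ S, Metric.closedBall p r := by
  classical
  refine ⟨100, by norm_num, ?_⟩
  intro β hβ R hRc hRconv m r hr hball hmax hdiam
  have hm : m ∈ R := hball (mem_closedBall_self hr.le)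
  -- extract a farthest pair (a, b)
  obtain ⟨⟨a, b⟩, hab, hmaxd⟩ :=
    (hRc.prod hRc).exists_isMaxOn (Set.Nonempty.prod ⟨m, hm⟩ ⟨m, hm⟩)
      (continuous_dist.continuousOn)
  have ha : a ∈ R := hab.1
  have hb : b ∈ R := hab.2
  set D := dist a b with hDdef
  have hdd : ∀ p ∈ R, ∀ q ∈ R, dist p q ≤ D := fun p hp q hq =>
    isMaxOn_iff.1 hmaxd (p, q) (Set.mk_mem_prod hp hq)
  -- D ≥ 2r
  have hDr : 2 * r ≤ D := by
    have h1 : m + EuclideanSpace.single 0 r ∈ R := by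
      apply hball
      simp [mem_closedBall, dist_self_add_left, EuclideanSpace.norm_single,
        _root_.abs_of_nonneg hr.le]
    have h2 : m - EuclideanSpace.single 0 r ∈ R := by
      apply hball
      simp [mem_closedBall, dist_self_sub_left, EuclideanSpace.norm_single,
        _root_.abs_of_nonneg hr.le]
    have h3 : dist (m + EuclideanSpace.single 0 r) (m - EuclideanSpace.single 0 r) = 2 * r := by
      rw [dist_eq_norm, show (m + EuclideanSpace.single 0 r) - (m - EuclideanSpace.single 0 r)
        = (2 : ℝ) • EuclideanSpace.single 0 r by module]
      rw [norm_smul, EuclideanSpace.norm_single]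
      simp [_root_.abs_of_nonneg hr.le]
    calc 2 * r = dist (m + EuclideanSpace.single 0 r) (m - EuclideanSpace.single 0 r) := h3.symm
      _ ≤ D := hdd _ h1 _ h2
  have hD0 : 0 < D := lt_of_lt_of_le (by positivity) hDr
  have hDβ : D ≤ 2 * β * r := le_trans (dist_le_diam_of_mem hRc.isBounded ha hb) hdiam
  -- transfer to ℂ
  set T : EuclideanSpace ℝ (Fin 2) ≃ₗᵢ[ℝ] ℂ := Complex.orthonormalBasisOneI.repr.symm with hT
  set a₀ : ℂ := T a
  set b₀ : ℂ := T b
  have hba : ‖b₀ - a₀‖ = D := by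
    rw [← Complex.dist_eq]
    rw [show dist b₀ a₀ = dist b a from T.dist_map b a]
    exact dist_comm b a
  set u : ℂ := (b₀ - a₀) / (D : ℂ) with hu_def
  have hu : ‖u‖ = 1 := by
    rw [hu_def, norm_div, hba, Complex.norm_real, Real.norm_eq_abs, abs_of_pos hD0, div_self hD0.ne']
  have hcu : (starRingEnd ℂ) u * u = 1 := by
    rw [mul_comm, Complex.mul_conj, Complex.normSq_eq_norm_sq, hu]
    norm_num
  have hbau : b₀ - a₀ = u * (D : ℂ) := by
    rw [hu_def, div_mul_cancel₀]
    exact_mod_cast hD0.ne'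
  set Ψ : EuclideanSpace ℝ (Fin 2) → ℂ := fun x => (starRingEnd ℂ) u * (T x - a₀) with hΨ_def
  set Φ : ℂ → EuclideanSpace ℝ (Fin 2) := fun z => T.symm (u * z + a₀) with hΦ_def
  have hΦΨ : ∀ x, Φ (Ψ x) = x := by
    intro x
    simp only [hΦ_def, hΨ_def]
    rw [← mul_assoc, mul_comm u, hcu, one_mul, sub_add_cancel, T.symm_apply_apply]
  have hΨΦ : ∀ z, Ψ (Φ z) = z := by
    intro z
    simp only [hΦ_def, hΨ_def]
    rw [T.apply_symm_apply, add_sub_cancel_right, ← mul_assoc, hcu, one_mul]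
  have hΨd : ∀ x y, dist (Ψ x) (Ψ y) = dist x y := by
    intro x y
    simp only [hΨ_def, Complex.dist_eq]
    rw [show (starRingEnd ℂ) u * (T x - a₀) - (starRingEnd ℂ) u * (T y - a₀)
      = (starRingEnd ℂ) u * (T x - T y) by ring]
    rw [norm_mul, Complex.norm_conj, hu, one_mul, ← Complex.dist_eq, T.dist_map]
  have hΨa : Ψ a = 0 := by simp [hΨ_def, a₀]
  have hΨb : Ψ b = (D : ℂ) := by
    simp only [hΨ_def]
    rw [show T b - a₀ = b₀ - a₀ from rfl, hbau, ← mul_assoc, hcu, one_mul]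
  -- coordinate bounds
  have key : ∀ p ∈ R, 0 ≤ (Ψ p).re ∧ (Ψ p).re ≤ D ∧ |(Ψ p).im| ≤ D := by
    intro p hp
    have h1 : ‖Ψ p‖ ≤ D := by
      rw [show ‖Ψ p‖ = dist (Ψ p) (Ψ a) by rw [hΨa, Complex.dist_eq, sub_zero]]
      rw [hΨd]; exact hdd p hp a ha
    have h2 : ‖Ψ p - (D : ℂ)‖ ≤ D := by
      rw [← hΨb, ← Complex.dist_eq, hΨd]; exact hdd p hp b hb
    have h3 : |(Ψ p).re - D| ≤ D := by
      have := (Complex.abs_re_le_norm (Ψ p - (D : ℂ))).trans h2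
      rwa [Complex.sub_re, Complex.ofReal_re] at this
    exact ⟨by linarith [(abs_le.1 h3).1],
      (Complex.re_le_norm _).trans h1, (Complex.abs_im_le_norm _).trans h1⟩
  -- width bound: |im| ≤ 6r
  have hIm : ∀ p ∈ R, |(Ψ p).im| ≤ 6 * r := by
    intro p hp
    set z := Ψ p with hz_def
    obtain ⟨hzre0, hzreD, hzimD⟩ := key p hp
    rcases eq_or_ne z.im 0 with h0 | h0
    · rw [h0, abs_zero]; positivity
    set ρ := |z.im| / 6 with hρ_def
    have hρ0 : 0 < ρ := by
      have := abs_pos.2 h0; positivity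
    have hρD : ρ ≤ D / 6 := by rw [hρ_def]; linarith
    set q : ℂ := ⟨(D + z.re) / 3, z.im / 3⟩ with hq_def
    have hsub : Metric.closedBall (Φ q) ρ ⊆ R := by
      intro x' hx'
      set x := Ψ x' with hx_def
      have hxq : ‖x - q‖ ≤ ρ := by
        have h := mem_closedBall.1 hx'
        rw [← hΨd x' (Φ q), hΨΦ, Complex.dist_eq] at h
        exact h
      have hxre : |x.re - (D + z.re) / 3| ≤ ρ :=
        le_trans (by simpa [hq_def] using Complex.abs_re_le_norm (x - q)) hxq
      have hxim : |x.im - z.im / 3| ≤ ρ :=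
        le_trans (by simpa [hq_def] using Complex.abs_im_le_norm (x - q)) hxq
      set γ := x.im / z.im with hγ_def
      have hγ : |γ - 1/3| ≤ 1/6 := by
        have gen : ∀ A B : ℝ, B ≠ 0 → A / B - 1/3 = (A - B/3) / B := by
          intro A B hB
          rw [sub_div]
          congr 1
          rw [div_div, mul_comm 3 B, ← div_div, div_self hB]
        have heq : γ - 1/3 = (x.im - z.im / 3) / z.im := by
          rw [hγ_def]; exact gen _ _ h0
        rw [heq, abs_div, div_le_iff₀ (abs_pos.2 h0)]
        calc |x.im - z.im / 3| ≤ ρ := hxim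
          _ = 1/6 * |z.im| := by rw [hρ_def]; ring
      have hγlo : 1/6 ≤ γ := by linarith [(abs_le.1 hγ).1]
      have hγhi : γ ≤ 1/2 := by linarith [(abs_le.1 hγ).2]
      set b' := (x.re - γ * z.re) / D with hb'_def
      have hxrelo : (D + z.re) / 3 - ρ ≤ x.re := by linarith [(abs_le.1 hxre).1]
      have hxrehi : x.re ≤ (D + z.re) / 3 + ρ := by linarith [(abs_le.1 hxre).2]
      have hβ0 : 0 ≤ b' := by
        apply div_nonneg _ hD0.le
        nlinarith [mul_nonneg (by linarith : (0:ℝ) ≤ 1/2 - γ) hzre0]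
      have hα0 : 0 ≤ 1 - b' - γ := by
        have hnum : x.re - γ * z.re ≤ (1 - γ) * D := by
          nlinarith [mul_nonneg (by linarith : (0:ℝ) ≤ 1/2 - γ) (by linarith : (0:ℝ) ≤ D - z.re)]
        have := (div_le_iff₀ hD0).2 hnum
        rw [hb'_def]
        have hb'le : b' ≤ 1 - γ := by
          rw [hb'_def]; rw [div_le_iff₀ hD0]; linarith [hnum]
        linarith
      have hγ0 : (0:ℝ) ≤ γ := by linarith
      have hx_eq : x = (b' : ℂ) * (D : ℂ) + (γ : ℂ) * z := by
        apply Complex.ext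
        · simp only [Complex.add_re, Complex.mul_re, Complex.ofReal_re, Complex.ofReal_im]
          rw [hb'_def]
          field_simp
          ring
        · simp only [Complex.add_im, Complex.mul_im, Complex.ofReal_re, Complex.ofReal_im]
          rw [hγ_def]
          field_simp
          ring
      have hΦ0 : Φ 0 = a := by
        simp only [hΦ_def, mul_zero, zero_add]
        exact T.symm_apply_apply a
      have hΦD : Φ (D : ℂ) = b := by
        simp only [hΦ_def]
        rw [← hbau, sub_add_cancel]
        exact T.symm_apply_apply b
      have hΦz : Φ z = p := hΦΨ p
      have hmem : (1 - b' - γ) • a + b' • b + γ • p ∈ R :=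
        combo3 hRconv ha hb hp hα0 hβ0 hγ0 (by ring)
      have hxx : x' = (1 - b' - γ) • a + b' • b + γ • p := by
        rw [← hΦ0, ← hΦD, ← hΦz, ← hΦΨ x', ← hx_def]
        simp only [hΦ_def]
        rw [← T.symm.map_smul, ← T.symm.map_smul, ← T.symm.map_smul,
          ← T.symm.map_add, ← T.symm.map_add]
        congr 1
        simp only [Complex.real_smul]
        rw [hx_eq]
        push_cast
        ring
      rw [hxx]; exact hmem
    have hρr : ρ ≤ r := hmax (Φ q) ρ hsub
    rw [hρ_def] at hρr
    linarith
  -- the covering grid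
  set n₁ : ℕ := Nat.floor (2 * β) + 1 with hn₁
  set ctr : ℕ → ℕ → ℂ := fun i j => ⟨i * r + r / 2, -(6 * r) + j * r + r / 2⟩ with hctr
  refine ⟨(Finset.range n₁ ×ˢ Finset.range 13).image (fun ij => Φ (ctr ij.1 ij.2)), ?_, ?_⟩
  · calc ((Finset.image (fun ij => Φ (ctr ij.1 ij.2)) (Finset.range n₁ ×ˢ Finset.range 13)).card : ℝ)
        ≤ ((Finset.range n₁ ×ˢ Finset.range 13).card : ℝ) := by
          exact_mod_cast Finset.card_image_le
      _ = (n₁ : ℝ) * 13 := by simp [Finset.card_product]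
      _ ≤ (2 * β + 1) * 13 := by
          have h1 : (n₁ : ℝ) ≤ 2 * β + 1 := by
            rw [hn₁]
            push_cast
            linarith [Nat.floor_le (by positivity : (0:ℝ) ≤ 2 * β)]
          nlinarith
      _ ≤ 100 * β := by nlinarith
  · intro p hp
    set z := Ψ p with hz_def
    obtain ⟨hzre0, hzreD, _⟩ := key p hp
    have hzim := hIm p hp
    have hzimlo : -(6 * r) ≤ z.im := by linarith [(abs_le.1 hzim).1]
    have hzimhi : z.im ≤ 6 * r := (abs_le.1 hzim).2
    set i := Nat.floor (z.re / r) with hi_def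
    set j := Nat.floor ((z.im + 6 * r) / r) with hj_def
    have hir : (i : ℝ) * r ≤ z.re := by
      rw [← le_div_iff₀ hr]
      exact Nat.floor_le (by positivity)
    have hir2 : z.re < ((i : ℝ) + 1) * r := by
      rw [← div_lt_iff₀ hr]
      exact_mod_cast Nat.lt_succ_floor _
    have hjr : (j : ℝ) * r ≤ z.im + 6 * r := by
      rw [← le_div_iff₀ hr]
      exact Nat.floor_le (div_nonneg (by linarith) hr.le)
    have hjr2 : z.im + 6 * r < ((j : ℝ) + 1) * r := by
      rw [← div_lt_iff₀ hr]
      exact_mod_cast Nat.lt_succ_floor _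
    have hin : i < n₁ := by
      rw [hn₁, Nat.lt_succ_iff]
      apply Nat.floor_le_floor
      rw [div_le_iff₀ hr]
      calc z.re ≤ D := hzreD
        _ ≤ 2 * β * r := hDβ
        _ = (2 * β) * r := by ring
    have hjn : j < 13 := by
      rw [hj_def, Nat.floor_lt (div_nonneg (by linarith) hr.le)]
      rw [div_lt_iff₀ hr]
      push_cast
      linarith
    have hdist : dist p (Φ (ctr i j)) ≤ r := by
      rw [← hΨd, hΨΦ, Complex.dist_eq]
      have h1 : |(z - ctr i j).re| ≤ r / 2 := by
        simp only [hctr, Complex.sub_re]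
        rw [abs_le]
        constructor <;> nlinarith
      have h2 : |(z - ctr i j).im| ≤ r / 2 := by
        simp only [hctr, Complex.sub_im]
        rw [abs_le]
        constructor <;> nlinarith
      calc ‖z - ctr i j‖ ≤ |(z - ctr i j).re| + |(z - ctr i j).im| :=
            Complex.norm_le_abs_re_add_abs_im _
        _ ≤ r / 2 + r / 2 := add_le_add h1 h2
        _ = r := by ring
    have hmemS : Φ (ctr i j) ∈
        (Finset.range n₁ ×ˢ Finset.range 13).image (fun ij => Φ (ctr ij.1 ij.2)) :=
      Finset.mem_image.mpr ⟨(i, j), Finset.mem_product.mpr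
        ⟨Finset.mem_range.mpr hin, Finset.mem_range.mpr hjn⟩, rfl⟩
    exact Set.mem_iUnion₂.2 ⟨Φ (ctr i j), hmemS, mem_closedBall.2 hdist⟩
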